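/- (Error bound for projected gradient step.) Let f : ℝ^n → ℝ be l-smooth and μ-strongly convex, X ⊆ ℝ^n closed convex, x* = argmin_{x∈X} f(x), η ≤ 1/l, and x⁺ = Π_X(x − η∇f(x)). Then ‖x − x*‖ ≤ (2/(μη))‖x − x⁺‖. -/

import Mathlib

open Set InnerProductSpace Filter Topology

section Aux

variable {E : Type*} [NormedAddCommGroup E] [InnerProductSpace ℝ E]

local notation "⟪" a ", " b "⟫" => @inner ℝ _ _ a b

private lemma line_hasDerivAt' [CompleteSpace E] {f : E → ℝ} {g x : E}
    (hf : HasGradientAt f g x) (v : E) :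
    HasDerivAt (fun t : ℝ => f (x + t • v)) ⟪g, v⟫ 0 := by
  have hc : HasDerivAt (fun t : ℝ => x + t • v) v 0 := by
    simpa using ((hasDerivAt_id (0:ℝ)).smul_const v).const_add x
  have hfd : HasFDerivAt f ((toDual ℝ E) g) (x + (0:ℝ) • v) := by
    simpa using hf.hasFDerivAt
  have h := hfd.comp_hasDerivAt 0 hc
  simp at h
  exact h

private lemma deriv_le_of_slope_le' {g : ℝ → ℝ} {d : ℝ} (hg : HasDerivAt g d 0) (b : ℝ → ℝ)
    (hb : ContinuousAt b 0) (h : ∀ t ∈ Ioc (0:ℝ) 1, g t - g 0 ≤ t * b t) : d ≤ b 0 := by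
  have hs : Tendsto (slope g 0) (𝓝[>] 0) (𝓝 d) :=
    (hasDerivAt_iff_tendsto_slope.mp hg).mono_left
      (nhdsWithin_mono _ fun t ht => ne_of_gt ht)
  have hbt : Tendsto b (𝓝[>] (0:ℝ)) (𝓝 (b 0)) := hb.tendsto.mono_left nhdsWithin_le_nhds
  refine le_of_tendsto_of_tendsto hs hbt ?_
  filter_upwards [Ioc_mem_nhdsGT one_pos] with t ht
  have ht0 : (0:ℝ) < t := ht.1
  show slope g 0 t ≤ b t
  simp only [slope_def_field, sub_zero]
  rw [div_le_iff₀ ht0]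
  linarith [h t ht]

private lemma deriv_ge_of_slope_ge' {g : ℝ → ℝ} {d : ℝ} (hg : HasDerivAt g d 0) (b : ℝ → ℝ)
    (hb : ContinuousAt b 0) (h : ∀ t ∈ Ioc (0:ℝ) 1, t * b t ≤ g t - g 0) : b 0 ≤ d := by
  have := deriv_le_of_slope_le' hg.neg (fun t => - b t) hb.neg ?_
  · simpa using this
  · intro t ht
    have := neg_le_neg (h t ht)
    simp only [mul_neg, neg_sub, Pi.neg_apply] at this ⊢
    linarith

variable [CompleteSpace E]

/-- First-order condition for strongly convex functions. -/
private lemma strong_first_order {f : E → ℝ} {f' : E → E} (hf' : ∀ x, HasGradientAt f (f' x) x)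
    {μ : ℝ} (hsc : StrongConvexOn univ μ f) (x y : E) :
    f x + ⟪f' x, y - x⟫ + μ / 2 * ‖y - x‖ ^ 2 ≤ f y := by
  have hd := line_hasDerivAt' (hf' x) (y - x)
  set b : ℝ → ℝ := fun t => (f y - f x) - (1 - t) * (μ / 2 * ‖x - y‖ ^ 2) with hb
  have hbc : ContinuousAt b 0 := by fun_prop
  have key : ⟪f' x, y - x⟫ ≤ b 0 := by
    refine deriv_le_of_slope_le' hd b hbc ?_
    intro t ht
    have hline : x + t • (y - x) = (1 - t) • x + t • y := by module
    have hcvx := hsc.2 (mem_univ x) (mem_univ y) (by linarith [ht.2] : (0:ℝ) ≤ 1 - t)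
      ht.1.le (by ring)
    simp only [smul_eq_mul] at hcvx
    simp only [hline, hb]
    have h0 : x + (0:ℝ) • (y - x) = x := by simp
    rw [h0]
    nlinarith [hcvx]
  have : ‖x - y‖ = ‖y - x‖ := norm_sub_rev _ _
  simp only [hb, this] at key
  linarith

/-- Strong monotonicity of the gradient. -/
private lemma strong_mono {f : E → ℝ} {f' : E → E} (hf' : ∀ x, HasGradientAt f (f' x) x)
    {μ : ℝ} (hsc : StrongConvexOn univ μ f) (x y : E) :
    μ * ‖x - y‖ ^ 2 ≤ ⟪f' x - f' y, x - y⟫ := by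
  have h1 := strong_first_order hf' hsc x y
  have h2 := strong_first_order hf' hsc y x
  have e1 : ⟪f' x, y - x⟫ = - ⟪f' x, x - y⟫ := by
    rw [← inner_neg_right]; congr 1; abel
  have e2 : ⟪f' x - f' y, x - y⟫ = ⟪f' x, x - y⟫ - ⟪f' y, x - y⟫ := inner_sub_left _ _ _
  have e3 : ‖y - x‖ = ‖x - y‖ := norm_sub_rev _ _
  rw [e1, e3] at h1
  rw [e2]
  linarith

/-- Variational inequality at a constrained minimizer. -/
private lemma var_ineq {f : E → ℝ} {f' : E → E} (hf' : ∀ x, HasGradientAt f (f' x) x)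
    {X : Set E} (hXcv : Convex ℝ X) {xstar : E} (hxstar : xstar ∈ X)
    (hmin : IsMinOn f X xstar) {w : E} (hw : w ∈ X) :
    0 ≤ ⟪f' xstar, w - xstar⟫ := by
  have hd := line_hasDerivAt' (hf' xstar) (w - xstar)
  have key := deriv_ge_of_slope_ge' hd (fun _ => (0:ℝ)) (by fun_prop) ?_
  · simpa using key
  · intro t ht
    have hline : xstar + t • (w - xstar) = (1 - t) • xstar + t • w := by module
    have hmem : (1 - t) • xstar + t • w ∈ X :=
      hXcv hxstar hw (by linarith [ht.2]) ht.1.le (by ring)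
    have h0 : xstar + (0:ℝ) • (w - xstar) = xstar := by simp
    have := hmin (by rw [← hline] at hmem; exact hmem)
    simp only [h0, mul_zero]
    simpa using this

end Aux

open Set

/-- Error bound for a projected gradient step: if `f` is `l`-smooth and `μ`-strongly convex,
`X` closed convex, `x* = argmin_X f`, `η ≤ 1/l`, and `x⁺ = Π_X(x − η∇f(x))`, then
`‖x − x*‖ ≤ (2/(μη))‖x − x⁺‖`. -/
theorem stmt4 {n : ℕ} (l μ η : ℝ) (hμ : 0 < μ) (hμl : μ ≤ l) (hη : 0 < η) (hηl : η ≤ 1 / l)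
    (f : EuclideanSpace ℝ (Fin n) → ℝ)
    (f' : EuclideanSpace ℝ (Fin n) → EuclideanSpace ℝ (Fin n))
    (hf' : ∀ x, HasGradientAt f (f' x) x)
    (hsmooth : ∀ x₁ x₂, ‖f' x₁ - f' x₂‖ ≤ l * ‖x₁ - x₂‖)
    (hsc : StrongConvexOn univ μ f)
    (X : Set (EuclideanSpace ℝ (Fin n)))
    (hXne : X.Nonempty) (hXcl : IsClosed X) (hXcv : Convex ℝ X)
    (xstar : EuclideanSpace ℝ (Fin n)) (hxstar : xstar ∈ X) (hxstarmin : IsMinOn f X xstar)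
    (x xplus : EuclideanSpace ℝ (Fin n)) (hxplus : xplus ∈ X)
    (hproj : ∀ w ∈ X, ‖x - η • f' x - xplus‖ ≤ ‖x - η • f' x - w‖) :
    ‖x - xstar‖ ≤ 2 / (μ * η) * ‖x - xplus‖ := by
  set a := x - xstar with ha
  set b := x - xplus with hbv
  set u := f' x - f' xstar with hu
  have hl : 0 < l := lt_of_lt_of_le hμ hμl
  have hηl1 : η * l ≤ 1 := by
    calc η * l ≤ (1 / l) * l := by gcongr
    _ = 1 := by field_simp
  -- strong monotonicity
  have h1 : μ * ‖a‖ ^ 2 ≤ @inner ℝ _ _ u a := strong_mono hf' hsc x xstar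
  -- projection inequality
  have hbdd : BddBelow (Set.range fun w : X => ‖x - η • f' x - (w : EuclideanSpace ℝ (Fin n))‖) :=
    ⟨0, by rintro r ⟨w, rfl⟩; exact norm_nonneg _⟩
  haveI : Nonempty X := ⟨⟨xplus, hxplus⟩⟩
  have heq : ‖x - η • f' x - xplus‖ = ⨅ w : X, ‖x - η • f' x - (w : EuclideanSpace ℝ (Fin n))‖ :=
    le_antisymm (le_ciInf fun w => hproj w w.2) (ciInf_le hbdd ⟨xplus, hxplus⟩)
  have h2 : @inner ℝ _ _ (x - η • f' x - xplus) (xstar - xplus) ≤ 0 :=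
    (norm_eq_iInf_iff_real_inner_le_zero hXcv hxplus).mp heq xstar hxstar
  -- variational inequality
  have h3 : (0:ℝ) ≤ @inner ℝ _ _ (f' xstar) (xplus - xstar) :=
    var_ineq hf' hXcv hxstar hxstarmin hxplus
  -- rewrite vectors
  have e1 : x - η • f' x - xplus = b - η • f' x := by rw [hbv]; abel
  have e2 : xstar - xplus = b - a := by rw [ha, hbv]; abel
  have e3 : xplus - xstar = a - b := by rw [ha, hbv]; abel
  rw [e1, e2] at h2
  rw [e3] at h3
  -- combine: ⟪b - η•u, b - a⟫ ≤ 0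
  have e4 : b - η • u = (b - η • f' x) + η • f' xstar := by rw [hu]; module
  have h4 : @inner ℝ _ _ (b - η • u) (b - a) ≤ 0 := by
    rw [e4, inner_add_left, real_inner_smul_left]
    have : @inner ℝ _ _ (f' xstar) (b - a) = - @inner ℝ _ _ (f' xstar) (a - b) := by
      rw [← inner_neg_right]; congr 1; abel
    rw [this]
    nlinarith [h2, h3]
  have h5 : ‖b‖ ^ 2 - @inner ℝ _ _ b a - η * @inner ℝ _ _ u b + η * @inner ℝ _ _ u a ≤ 0 := by
    have expand : @inner ℝ _ _ (b - η • u) (b - a)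
        = @inner ℝ _ _ b b - @inner ℝ _ _ b a - η * @inner ℝ _ _ u b + η * @inner ℝ _ _ u a := by
      simp only [inner_sub_left, inner_sub_right, real_inner_smul_left]
      ring
    rw [expand, real_inner_self_eq_norm_sq] at h4
    linarith
  -- bounds
  have hba : @inner ℝ _ _ b a ≤ ‖b‖ * ‖a‖ := real_inner_le_norm _ _
  have hub : @inner ℝ _ _ u b ≤ ‖u‖ * ‖b‖ := real_inner_le_norm _ _
  have hunorm : ‖u‖ ≤ l * ‖a‖ := hsmooth x xstar
  have hkey : μ * η * ‖a‖ ^ 2 ≤ 2 * (‖a‖ * ‖b‖) := by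
    have t1 : η * @inner ℝ _ _ u b ≤ η * (‖u‖ * ‖b‖) := mul_le_mul_of_nonneg_left hub hη.le
    have t2 : ‖u‖ * ‖b‖ ≤ l * ‖a‖ * ‖b‖ := mul_le_mul_of_nonneg_right hunorm (norm_nonneg b)
    have t3 : η * (l * ‖a‖ * ‖b‖) ≤ 1 * (‖a‖ * ‖b‖) := by
      have : η * (l * ‖a‖ * ‖b‖) = (η * l) * (‖a‖ * ‖b‖) := by ring
      rw [this]
      exact mul_le_mul_of_nonneg_right hηl1 (by positivity)
    have t5 : μ * η * ‖a‖ ^ 2 ≤ η * @inner ℝ _ _ u a := by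
      calc μ * η * ‖a‖ ^ 2 = η * (μ * ‖a‖ ^ 2) := by ring
      _ ≤ η * @inner ℝ _ _ u a := mul_le_mul_of_nonneg_left h1 hη.le
    have t6 : η * (‖u‖ * ‖b‖) ≤ η * (l * ‖a‖ * ‖b‖) := mul_le_mul_of_nonneg_left t2 hη.le
    have hcm : ‖b‖ * ‖a‖ = ‖a‖ * ‖b‖ := mul_comm _ _
    linarith [sq_nonneg ‖b‖, hba, h5, t1, t3, t5, t6, hcm]
  rcases eq_or_lt_of_le (norm_nonneg a) with h0 | hapos
  · rw [← h0]
    positivity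
  · have hμη : 0 < μ * η := mul_pos hμ hη
    rw [div_mul_eq_mul_div, le_div_iff₀ hμη]
    have h6 : (‖a‖ * (μ * η)) * ‖a‖ ≤ (2 * ‖b‖) * ‖a‖ := by
      calc (‖a‖ * (μ * η)) * ‖a‖ = μ * η * ‖a‖ ^ 2 := by ring
      _ ≤ 2 * (‖a‖ * ‖b‖) := hkey
      _ = (2 * ‖b‖) * ‖a‖ := by ring
    have h7 := le_of_mul_le_mul_right h6 hapos
    linarith
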